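/- Modulo the ideal I generated by Γ₃, St₃, T₄ (under all variable substitutions), for all f₁, f₂ ∈ F⟨X⟩ and indices i < j: f₁ x_j x_i f₂ ≡ f₁ x_i x_j f₂ - f₁ f₂ [x_i, x_j] (mod I). -/

import Mathlib

open FreeAlgebra

/-- Γ₃(x_i, x_j, x_k) = [[x_i, x_j], x_k] in the free algebra. -/
noncomputable def Gamma3 (F : Type) [Field F] (i j k : ℕ) : FreeAlgebra F ℕ :=
  (ι F i * ι F j - ι F j * ι F i) * ι F k - ι F k * (ι F i * ι F j - ι F j * ι F i)

/-- St₃(x_i, x_j, x_k) = x_i[x_j,x_k] - x_j[x_i,x_k] + x_k[x_i,x_j]. -/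
noncomputable def St3 (F : Type) [Field F] (i j k : ℕ) : FreeAlgebra F ℕ :=
  ι F i * (ι F j * ι F k - ι F k * ι F j) - ι F j * (ι F i * ι F k - ι F k * ι F i) +
    ι F k * (ι F i * ι F j - ι F j * ι F i)

/-- T₄(x_i, x_j, x_k, x_l) = [x_i,x_j][x_k,x_l] - [x_i,x_k][x_j,x_l] + [x_j,x_k][x_i,x_l]. -/
noncomputable def T4 (F : Type) [Field F] (i j k l : ℕ) : FreeAlgebra F ℕ :=
  (ι F i * ι F j - ι F j * ι F i) * (ι F k * ι F l - ι F l * ι F k) -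
    (ι F i * ι F k - ι F k * ι F i) * (ι F j * ι F l - ι F l * ι F j) +
    (ι F j * ι F k - ι F k * ι F j) * (ι F i * ι F l - ι F l * ι F i)

/-- The generators of the ideal `I`: all substitutions of variables into Γ₃, St₃, T₄. -/
def weakGen (F : Type) [Field F] : Set (FreeAlgebra F ℕ) :=
  {g | (∃ i j k, g = Gamma3 F i j k) ∨ (∃ i j k, g = St3 F i j k) ∨
      (∃ i j k l, g = T4 F i j k l)}

/-- The two-sided ideal `I` of the free algebra generated by all substitutions of
variables into Γ₃, St₃, T₄, realized as the span of `a * g * b`. -/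
noncomputable def weakIdeal (F : Type) [Field F] : Submodule F (FreeAlgebra F ℕ) :=
  Submodule.span F {x | ∃ (a : FreeAlgebra F ℕ) (g : FreeAlgebra F ℕ) (b : FreeAlgebra F ℕ),
    g ∈ weakGen F ∧ x = a * g * b}

lemma weakIdeal_mul_left (F : Type) [Field F] (c x : FreeAlgebra F ℕ)
    (hx : x ∈ weakIdeal F) : c * x ∈ weakIdeal F := by
  induction hx using Submodule.span_induction with
  | mem y hy =>
    obtain ⟨a, g, b, hg, rfl⟩ := hy
    exact Submodule.subset_span ⟨c * a, g, b, hg, by noncomm_ring⟩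
  | zero => simpa using (weakIdeal F).zero_mem
  | add y z _ _ hy hz => simpa [mul_add] using (weakIdeal F).add_mem hy hz
  | smul r y _ hy => simpa [mul_smul_comm] using (weakIdeal F).smul_mem r hy

lemma weakIdeal_mul_right (F : Type) [Field F] (c x : FreeAlgebra F ℕ)
    (hx : x ∈ weakIdeal F) : x * c ∈ weakIdeal F := by
  induction hx using Submodule.span_induction with
  | mem y hy =>
    obtain ⟨a, g, b, hg, rfl⟩ := hy
    exact Submodule.subset_span ⟨a, g, b * c, hg, by noncomm_ring⟩
  | zero => simpa using (weakIdeal F).zero_mem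
  | add y z _ _ hy hz => simpa [add_mul] using (weakIdeal F).add_mem hy hz
  | smul r y _ hy => simpa [smul_mul_assoc] using (weakIdeal F).smul_mem r hy

lemma comm_comm_mem (F : Type) [Field F] (i j : ℕ) (f : FreeAlgebra F ℕ) :
    (ι F i * ι F j - ι F j * ι F i) * f - f * (ι F i * ι F j - ι F j * ι F i) ∈
      weakIdeal F := by
  set c : FreeAlgebra F ℕ := ι F i * ι F j - ι F j * ι F i with hc
  induction f using FreeAlgebra.induction with
  | grade0 r =>
    have : c * algebraMap F (FreeAlgebra F ℕ) r - algebraMap F (FreeAlgebra F ℕ) r * c = 0 := by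
      rw [Algebra.commutes]; noncomm_ring
    rw [this]; exact (weakIdeal F).zero_mem
  | grade1 k =>
    exact Submodule.subset_span ⟨1, Gamma3 F i j k, 1,
      Or.inl ⟨i, j, k, rfl⟩, by simp [Gamma3, hc]⟩
  | add a b ha hb => simpa [mul_add, add_mul, sub_add_sub_comm] using (weakIdeal F).add_mem ha hb
  | mul a b ha hb =>
    have h1 : (c * a - a * c) * b ∈ weakIdeal F := weakIdeal_mul_right F b _ ha
    have h2 : a * (c * b - b * c) ∈ weakIdeal F := weakIdeal_mul_left F a _ hb
    have := (weakIdeal F).add_mem h1 h2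
    have heq : (c * a - a * c) * b + a * (c * b - b * c) = c * (a * b) - (a * b) * c := by noncomm_ring
    rwa [heq] at this

/-- Modulo I: f₁ x_j x_i f₂ ≡ f₁ x_i x_j f₂ - f₁ f₂ [x_i, x_j]. -/
theorem swap_letters_mod_weakIdeal (F : Type) [Field F]
    (f₁ f₂ : FreeAlgebra F ℕ) (i j : ℕ) (hij : i < j) :
    f₁ * ι F j * ι F i * f₂ -
      (f₁ * ι F i * ι F j * f₂ - f₁ * f₂ * (ι F i * ι F j - ι F j * ι F i)) ∈
      weakIdeal F := by
  set c : FreeAlgebra F ℕ := ι F i * ι F j - ι F j * ι F i with hc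
  have h := weakIdeal_mul_left F f₁ _ ((weakIdeal F).neg_mem (comm_comm_mem F i j f₂))
  have heq : f₁ * -(c * f₂ - f₂ * c) =
      f₁ * ι F j * ι F i * f₂ - (f₁ * ι F i * ι F j * f₂ - f₁ * f₂ * c) := by
    rw [hc]; noncomm_ring
  rwa [heq] at h
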